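/- For every permutation w ∈ S_n and reduced pipe dream P ∈ PD(w), deleting from each row m the rightmost box of pipe n (the set B_m(P) of boxes in row m containing part of pipe n) and left-shifting yields a reduced pipe dream P̂ for the permutation ŵ ∈ S_{n-1} obtained from w by deleting the value n; moreover, the inversions tableau Θ(P̂) equals Θ(P) with column n deleted. -/

import Mathlib

open Classical

noncomputable section

/-- 1-based value of a permutation of `Fin n` at a 1-based position `j`. -/
def permVal {n : ℕ} (w : Equiv.Perm (Fin n)) (j : ℕ) : ℕ :=
  if h : 1 ≤ j ∧ j ≤ n then (w ⟨j - 1, by omega⟩ : ℕ) + 1 else 0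

/-- `(i,j)` is an inversion of `w`: `1 ≤ i < j ≤ n` and the (1-based) position of the
value `j` in the one-line notation of `w` precedes that of `i`. -/
def IsInv {n : ℕ} (w : Equiv.Perm (Fin n)) (i j : ℕ) : Prop :=
  1 ≤ i ∧ i < j ∧ j ≤ n ∧ permVal w.symm j < permVal w.symm i

/-- Lehmer form entry at box `(i,j)`: the number of `k ∈ [1, T(i,j)-1]` that do not
appear below box `(i,j)` in column `j`. -/
def lehmer (T : ℕ → ℕ → ℕ) (i j : ℕ) : ℕ :=
  ((Finset.Ico 1 (T i j)).filter fun k => ∀ i', 1 ≤ i' → i' < i → T i' j ≠ k).card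

/-- Incrementing box `(i,j)` of `T` yields `T'`:  with `a = T(i,j)` and `b` the smallest
integer greater than `a` not appearing below `(i,j)` in column `j`, either a pure
increment (if `b` is absent from column `j`) or a trade increment (swap `a` and `b`). -/
def IncrementAt (T T' : ℕ → ℕ → ℕ) (i j : ℕ) : Prop :=
  ∃ b, T i j < b ∧
    (∀ k, T i j < k → k < b → ∃ i', 1 ≤ i' ∧ i' < i ∧ T i' j = k) ∧
    (∀ i', 1 ≤ i' → i' < i → T i' j ≠ b) ∧
    (((∀ i', 1 ≤ i' → T i' j ≠ b) ∧
        T' = fun a c => if a = i ∧ c = j then b else T a c) ∨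
      (∃ i'', i < i'' ∧ T i'' j = b ∧
        T' = fun a c =>
          if a = i ∧ c = j then b else if a = i'' ∧ c = j then T i j else T a c))

/-- `IncBy M T T'`: `T'` is obtained from `T` by incrementing each box of the
multiset `M` (with multiplicity). -/
inductive IncBy : Multiset (ℕ × ℕ) → (ℕ → ℕ → ℕ) → (ℕ → ℕ → ℕ) → Prop
  | nil (T : ℕ → ℕ → ℕ) : IncBy 0 T T
  | cons {M : Multiset (ℕ × ℕ)} {T T' T'' : ℕ → ℕ → ℕ} {i j : ℕ} :
      IncrementAt T T' i j → IncBy M T' T'' → IncBy ((i, j) ::ₘ M) T T''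

/-- Column-injective tableau for `w`: a box has a nonzero entry iff it is an inversion
of `w`, and the nonzero entries in each column are distinct. -/
def ColInj {n : ℕ} (w : Equiv.Perm (Fin n)) (T : ℕ → ℕ → ℕ) : Prop :=
  (∀ i j, T i j ≠ 0 ↔ IsInv w i j) ∧
  ∀ i i' j, 1 ≤ i → i < i' → i' < j → T i j ≠ 0 → T i' j ≠ 0 → T i j ≠ T i' j

/-- The Λ-shape `Λ(i,j,k)` is balanced in `T`. -/
def LBal (T : ℕ → ℕ → ℕ) (i j k : ℕ) : Prop :=
  min (T i j) (T j k) ≤ T i k ∧ T i k ≤ max (T i j) (T j k)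

/-- Every Λ-shape of `Δ_{n-1}` is balanced in `T`. -/
def BalancedTab (n : ℕ) (T : ℕ → ℕ → ℕ) : Prop :=
  ∀ i j k, 1 ≤ i → i < j → j < k → k ≤ n → LBal T i j k

/-- Inversions tableau for `w`: balanced column-injective tableau whose entries in
row `i` are at most `i`. -/
def InvTab {n : ℕ} (w : Equiv.Perm (Fin n)) (T : ℕ → ℕ → ℕ) : Prop :=
  ColInj w T ∧ BalancedTab n T ∧ ∀ i j, T i j ≤ i

/-- The multiset of entries of `T` on `hook(i,k)`. -/
def hookEntries (T : ℕ → ℕ → ℕ) (i k : ℕ) : Multiset ℕ :=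
  (T i k ::ₘ (Finset.Ioo i k).val.map fun r => T r k) +
    (Finset.Ioo i k).val.map fun c => T i c

/-- The median ((k-i)-th smallest of the `2(k-i)-1` entries) of the hook of `(i,k)`. -/
def hookMedian (T : ℕ → ℕ → ℕ) (i k : ℕ) : ℕ :=
  ((hookEntries T i k).sort (· ≤ ·)).getD (k - i - 1) 0

/-! ## Pipe dreams

A pipe dream in the staircase `Δ_n` is encoded by `P : ℕ → ℕ → Bool`, where
`P i j = true` means box `(i,j)` (row `i` from the top, column `j` from the left,
with `1 ≤ i, j` and `i + j ≤ n`) is a cross tile, and `false` means a bump tile;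
boxes on the southeast boundary (`i + j = n + 1`) are elbow tiles. -/

/-- `labels n P i j` is the pair (label of the north edge, label of the east edge) of
the pipes passing through box `(i,j)`:  pipes enter at row `k` on the west side with
label `k` and propagate through cross, bump and elbow tiles. -/
def labels (n : ℕ) (P : ℕ → ℕ → Bool) (i j : ℕ) : ℕ × ℕ :=
  let west := if _h1 : j ≤ 1 then i else (labels n P i (j - 1)).2
  if _h : i + j ≤ n then
    if P i j then ((labels n P (i + 1) j).1, west)
    else (west, (labels n P (i + 1) j).1)
  else (west, west)
termination_by (n + 1 - i) + j
decreasing_by all_goals omega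

def northLabel (n : ℕ) (P : ℕ → ℕ → Bool) (i j : ℕ) : ℕ := (labels n P i j).1

def westLabel (n : ℕ) (P : ℕ → ℕ → Bool) (i j : ℕ) : ℕ :=
  if j ≤ 1 then i else (labels n P i (j - 1)).2

def southLabel (n : ℕ) (P : ℕ → ℕ → Bool) (i j : ℕ) : ℕ := (labels n P (i + 1) j).1

/-- Pipes `p` and `q` cross at box `(i,j)` of `P`. -/
def CrossAt (n : ℕ) (P : ℕ → ℕ → Bool) (i j p q : ℕ) : Prop :=
  1 ≤ i ∧ 1 ≤ j ∧ i + j ≤ n ∧ P i j = true ∧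
    ((westLabel n P i j = p ∧ southLabel n P i j = q) ∨
      (westLabel n P i j = q ∧ southLabel n P i j = p))

/-- `P` is a pipe dream for `w`: crosses lie in the staircase, and reading the pipe
labels along the north side gives the one-line notation of `w`. -/
def IsPD {n : ℕ} (w : Equiv.Perm (Fin n)) (P : ℕ → ℕ → Bool) : Prop :=
  (∀ i j, P i j = true → 1 ≤ i ∧ 1 ≤ j ∧ i + j ≤ n) ∧
    ∀ j, 1 ≤ j → j ≤ n → northLabel n P 1 j = permVal w j

/-- `P` is reduced: no two pipes cross more than once. -/
def Reduced (n : ℕ) (P : ℕ → ℕ → Bool) : Prop :=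
  ∀ p q i j i' j', CrossAt n P i j p q → CrossAt n P i' j' p q → i = i' ∧ j = j'

/-- The set of reduced pipe dreams for `w`. -/
def RPD {n : ℕ} (w : Equiv.Perm (Fin n)) :=
  { P : ℕ → ℕ → Bool // IsPD w P ∧ Reduced n P }

/-- `R` is a rectangle (rows `a < b`, columns `c < d`) in which a chute move of `P`
can take place: `NW(R)=(a,c)` and `SW(R)=(b,c)` are bumps, `SE(R)=(b,d)` is a bump or
elbow, and all other boxes of `R` are crosses. -/
def IsChuteRect (n : ℕ) (P : ℕ → ℕ → Bool) (a b c d : ℕ) : Prop :=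
  1 ≤ a ∧ a < b ∧ 1 ≤ c ∧ c < d ∧ b + d ≤ n + 1 ∧
    P a c = false ∧ P b c = false ∧ P b d = false ∧
    ∀ i j, a ≤ i → i ≤ b → c ≤ j → j ≤ d →
      ¬(i = a ∧ j = c) → ¬(i = b ∧ j = c) → ¬(i = b ∧ j = d) → P i j = true

/-- The result of the chute move in the rectangle with corners `(a,c)`, `(b,d)`:
the bump at `SW=(b,c)` becomes a cross and the cross at `NE=(a,d)` becomes a bump. -/
def chuteResult (P : ℕ → ℕ → Bool) (a b c d : ℕ) : ℕ → ℕ → Bool :=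
  fun i j => if i = b ∧ j = c then true else if i = a ∧ j = d then false else P i j

/-- `P'` is obtained from `P` by a single chute move. -/
def ChuteStep (n : ℕ) (P P' : ℕ → ℕ → Bool) : Prop :=
  ∃ a b c d, IsChuteRect n P a b c d ∧ P' = chuteResult P a b c d

/-- The chute move order on `RPD w`: `P ≤ Q` iff `Q` is obtained from `P`
by a sequence of chute moves. -/
def chuteLE {n : ℕ} (w : Equiv.Perm (Fin n)) (P Q : RPD w) : Prop :=
  Relation.ReflTransGen (fun X Y : RPD w => ChuteStep n X.1 Y.1) P Q

/-- `theta n P p q` is the index of the row in which pipes `p` and `q` cross in `P`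
(`0` if they do not cross).  For `P ∈ PD(w)` reduced, `theta n P` is the inversions
tableau `Θ(P)`. -/
def theta (n : ℕ) (P : ℕ → ℕ → Bool) (p q : ℕ) : ℕ :=
  if h : ∃ rc : ℕ × ℕ, CrossAt n P rc.1 rc.2 p q then (Classical.choose h).1 else 0

/-- The Lehmer tableau `Φ(P) = Λ(Θ(P))` of a pipe dream. -/
def phi (n : ℕ) (P : ℕ → ℕ → Bool) (i j : ℕ) : ℕ := lehmer (theta n P) i j

/-- Cover relation of the chute move order. -/
def chuteCovBy {n : ℕ} (w : Equiv.Perm (Fin n)) (P Q : RPD w) : Prop :=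
  chuteLE w P Q ∧ P ≠ Q ∧ ∀ R, chuteLE w P R → chuteLE w R Q → R = P ∨ R = Q

/-- The interval `[P, Q]` in the chute move order. -/
def chuteIcc {n : ℕ} (w : Equiv.Perm (Fin n)) (P Q : RPD w) : Set (RPD w) :=
  { R | chuteLE w P R ∧ chuteLE w R Q }

/-- A chain in the chute move order. -/
def chuteChain {n : ℕ} (w : Equiv.Perm (Fin n)) (C : Set (RPD w)) : Prop :=
  ∀ x ∈ C, ∀ y ∈ C, chuteLE w x y ∨ chuteLE w y x

/-- `[P,Q]` is a polygon: an interval of cardinality at least 4 that is the union of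
two chains whose intersection is `{P, Q}`. -/
def IsPolygon {n : ℕ} (w : Equiv.Perm (Fin n)) (P Q : RPD w) : Prop :=
  chuteLE w P Q ∧ 4 ≤ (chuteIcc w P Q).ncard ∧
    ∃ C₁ C₂ : Set (RPD w), chuteChain w C₁ ∧ chuteChain w C₂ ∧
      C₁ ∪ C₂ = chuteIcc w P Q ∧ C₁ ∩ C₂ = {P, Q}

/-- `m` is the meet (greatest lower bound) of `P` and `Q` in the chute move order. -/
def IsMeetOf {n : ℕ} (w : Equiv.Perm (Fin n)) (m P Q : RPD w) : Prop :=
  chuteLE w m P ∧ chuteLE w m Q ∧ ∀ r, chuteLE w r P → chuteLE w r Q → chuteLE w r m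

/-- `s` is the join (least upper bound) of `P` and `Q` in the chute move order. -/
def IsJoinOf {n : ℕ} (w : Equiv.Perm (Fin n)) (s P Q : RPD w) : Prop :=
  chuteLE w P s ∧ chuteLE w Q s ∧ ∀ r, chuteLE w P r → chuteLE w Q r → chuteLE w s r

/-- Box `(i,j)` of `P` contains part of pipe `p` (the pipe enters the box from its
west or south edge). -/
def HasPipe (n : ℕ) (P : ℕ → ℕ → Bool) (i j p : ℕ) : Prop :=
  westLabel n P i j = p ∨ (i + j ≤ n ∧ southLabel n P i j = p)

/-- The column of the rightmost box of row `m` containing part of pipe `n`. -/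
def delCol (n : ℕ) (P : ℕ → ℕ → Bool) (m : ℕ) : ℕ :=
  Nat.findGreatest (fun j => 1 ≤ j ∧ m + j ≤ n + 1 ∧ HasPipe n P m j n) (n + 1)

/-- The pipe dream `P̂` obtained from `P` by deleting, in each row, the rightmost box
containing part of pipe `n`, and left-shifting the boxes to its right. -/
def hatPD (n : ℕ) (P : ℕ → ℕ → Bool) : ℕ → ℕ → Bool :=
  fun i j => if j < delCol n P i then P i j else P i (j + 1)

/-! ## Auxiliary machinery for Statement 16 -/

def Elab (n : ℕ) (P : ℕ → ℕ → Bool) (i j : ℕ) : ℕ :=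
  if j = 0 then i else (labels n P i j).2

def Nlab (n : ℕ) (P : ℕ → ℕ → Bool) (i j : ℕ) : ℕ := (labels n P i j).1

theorem labels_eq' (n : ℕ) (P : ℕ → ℕ → Bool) (i j : ℕ) (hj : 1 ≤ j) :
    labels n P i j = if i + j ≤ n then
      (if P i j then (Nlab n P (i+1) j, Elab n P i (j-1))
       else (Elab n P i (j-1), Nlab n P (i+1) j))
    else (Elab n P i (j-1), Elab n P i (j-1)) := by
  rw [labels]
  have hw : (if _h1 : j ≤ 1 then i else (labels n P i (j - 1)).2) = Elab n P i (j-1) := by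
    rcases Nat.eq_or_lt_of_le hj with h | h
    · simp [← h, Elab]
    · rw [dif_neg (by omega), Elab, if_neg (by omega)]
  rw [hw]
  split
  · split <;> rfl
  · rfl

section Unfold
variable (n : ℕ) (P : ℕ → ℕ → Bool) (i j : ℕ)

theorem Elab_zero : Elab n P i 0 = i := rfl

theorem Nlab_cross (h : i + j ≤ n) (hc : P i j = true) (hj : 1 ≤ j) :
    Nlab n P i j = Nlab n P (i+1) j := by
  rw [Nlab, labels_eq' n P i j hj, if_pos h, if_pos hc]

theorem Nlab_bump (h : i + j ≤ n) (hc : P i j = false) (hj : 1 ≤ j) :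
    Nlab n P i j = Elab n P i (j-1) := by
  rw [Nlab, labels_eq' n P i j hj, if_pos h, if_neg (by simp [hc])]

theorem Nlab_out (h : n < i + j) (hj : 1 ≤ j) :
    Nlab n P i j = Elab n P i (j-1) := by
  rw [Nlab, labels_eq' n P i j hj, if_neg (by omega)]

theorem Elab_cross (h : i + j ≤ n) (hc : P i j = true) (hj : 1 ≤ j) :
    Elab n P i j = Elab n P i (j-1) := by
  rw [Elab, if_neg (by omega), labels_eq' n P i j hj, if_pos h, if_pos hc]

theorem Elab_bump (h : i + j ≤ n) (hc : P i j = false) (hj : 1 ≤ j) :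
    Elab n P i j = Nlab n P (i+1) j := by
  rw [Elab, if_neg (by omega), labels_eq' n P i j hj, if_pos h, if_neg (by simp [hc])]

theorem Elab_out (h : n < i + j) (hj : 1 ≤ j) :
    Elab n P i j = Elab n P i (j-1) := by
  rw [Elab, if_neg (by omega), labels_eq' n P i j hj, if_neg (by omega)]

theorem westLabel_eq (hj : 1 ≤ j) : westLabel n P i j = Elab n P i (j-1) := by
  rw [westLabel]
  rcases Nat.eq_or_lt_of_le hj with h | h
  · simp [← h, Elab]
  · rw [if_neg (by omega), Elab, if_neg (by omega)]

theorem southLabel_eq : southLabel n P i j = Nlab n P (i+1) j := rfl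

theorem northLabel_eq : northLabel n P i j = Nlab n P i j := rfl

end Unfold
/-- Rightmost column of pipe `n` in row `m`, defined by downward recursion. -/
def Dcol (n : ℕ) (P : ℕ → ℕ → Bool) (m : ℕ) : ℕ :=
  if n ≤ m then 1
  else if P m (Dcol n P (m+1)) then Dcol n P (m+1) else Dcol n P (m+1) + 1
termination_by n - m
decreasing_by omega

/-- The row invariant for the trajectory of pipe `n`. -/
def Jrow (n : ℕ) (P : ℕ → ℕ → Bool) (m : ℕ) : Prop :=
  (1 ≤ Dcol n P m ∧ m + Dcol n P m ≤ n + 1) ∧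
  (Nlab n P m (Dcol n P m) = n) ∧
  (∀ j, 1 ≤ j → m + j ≤ n + 1 → j ≠ Dcol n P m → Nlab n P m j ≠ n) ∧
  (∀ j, 1 ≤ j → m + j ≤ n →
    (Elab n P m j = n ↔ (m < n ∧ P m (Dcol n P (m+1)) = false ∧ j = Dcol n P (m+1)))) ∧
  (∀ j, Dcol n P m < j → m + j ≤ n + 1 →
    ∃ r c', m ≤ r ∧ CrossAt n P r c' (Nlab n P m j) n) ∧
  (∀ j, Dcol n P m ≤ j → m + j ≤ n →
    ∃ r c', m ≤ r ∧ CrossAt n P r c' (Elab n P m j) n) ∧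
  (delCol n P m = Dcol n P m) ∧
  (m < n →
    (P m (Dcol n P (m+1)) = true ∧ Dcol n P m = Dcol n P (m+1)) ∨
    (P m (Dcol n P (m+1)) = false ∧ Dcol n P m = Dcol n P (m+1) + 1 ∧
      (m + Dcol n P (m+1) + 1 ≤ n → P m (Dcol n P (m+1) + 1) = false)))

theorem Jrow_base (n : ℕ) (P : ℕ → ℕ → Bool) (hn : 1 ≤ n) : Jrow n P n := by
  have hD : Dcol n P n = 1 := by rw [Dcol]; simp
  refine ⟨⟨by omega, by omega⟩, ?_, ?_, ?_, ?_, ?_, ?_, ?_⟩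
  · rw [hD, Nlab_out n P n 1 (by omega) le_rfl]; rfl
  · intro j h1 h2 hne; rw [hD] at hne; omega
  · intro j h1 h2; omega
  · intro j h1 h2; rw [hD] at h1; omega
  · intro j h1 h2; omega
  · rw [hD, delCol, Nat.findGreatest_eq_iff]
    refine ⟨by omega, fun _ => ⟨le_rfl, by omega, Or.inl ?_⟩, fun j hj hj2 hp => by omega⟩
    · rw [westLabel]; simp
  · omega
theorem Jrow_step (n : ℕ) (P : ℕ → ℕ → Bool)
    (hR : Reduced n P) (m : ℕ) (h1m : 1 ≤ m) (hmn : m < n)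
    (IH : Jrow n P (m+1)) : Jrow n P m := by
  obtain ⟨⟨hc1, hc2⟩, ihj2, ihj3, ihj4, ihj5, ihj6, ihj7, ihj8⟩ := IH
  set c := Dcol n P (m+1) with hc
  have hbox : m + c ≤ n := by omega
  have hDm : Dcol n P m = if P m c then c else c + 1 := by
    rw [Dcol]; rw [if_neg (by omega)]
  -- the key Reduced-based fact
  have hno : m + c + 1 ≤ n → P m c = false → P m (c+1) = false := by
    intro hle hb
    by_contra hcr
    rw [Bool.not_eq_false] at hcr
    have hE : Elab n P m c = n := by
      rw [Elab_bump n P m c hbox hb hc1]; exact ihj2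
    have hcross1 : CrossAt n P m (c+1) (Nlab n P (m+1) (c+1)) n := by
      refine ⟨h1m, by omega, by omega, hcr, Or.inr ⟨?_, rfl⟩⟩
      rw [westLabel_eq n P m (c+1) (by omega)]
      simpa using hE
    obtain ⟨r, c'', hr, hcross2⟩ := ihj5 (c+1) (by omega) (by omega)
    obtain ⟨he, -⟩ := hR (Nlab n P (m+1) (c+1)) n m (c+1) r c'' hcross1 hcross2
    omega
  have hstruct : (P m c = true ∧ Dcol n P m = c) ∨
      (P m c = false ∧ Dcol n P m = c + 1 ∧ (m + c + 1 ≤ n → P m (c+1) = false)) := by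
    cases hb : P m c with
    | true => exact Or.inl ⟨rfl, by rw [hDm, if_pos hb]⟩
    | false => exact Or.inr ⟨rfl, by rw [hDm, if_neg (by simp [hb])], fun h => hno h hb⟩
  set d := Dcol n P m with hd
  have hd1 : 1 ≤ d := by rcases hstruct with ⟨-, h⟩ | ⟨-, h, -⟩ <;> omega
  have hd2 : m + d ≤ n + 1 := by rcases hstruct with ⟨-, h⟩ | ⟨-, h, -⟩ <;> omega
  have hcd : c ≤ d := by rcases hstruct with ⟨-, h⟩ | ⟨-, h, -⟩ <;> omega
  -- j4
  have hj4 : ∀ j, 1 ≤ j → m + j ≤ n →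
      (Elab n P m j = n ↔ (m < n ∧ P m c = false ∧ j = c)) := by
    intro j
    induction j using Nat.strong_induction_on with
    | _ j ihj =>
      intro h1 h2
      cases hpc : P m j with
      | true =>
        rw [Elab_cross n P m j h2 hpc h1]
        rcases Nat.lt_or_ge 1 j with h1' | h1'
        · rw [ihj (j-1) (by omega) (by omega) (by omega)]
          constructor
          · rintro ⟨-, hb, he⟩
            have : j = c + 1 := by omega
            rw [this] at hpc
            rw [hno (by omega) hb] at hpc
            exact absurd hpc (by simp)
          · rintro ⟨-, hb, rfl⟩
            rw [hb] at hpc; exact absurd hpc (by simp)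
        · have : j = 1 := by omega
          subst this
          have h0 : Elab n P m (1-1) = m := rfl
          rw [h0]
          constructor
          · intro h; omega
          · rintro ⟨-, hb, h1c⟩
            rw [← h1c] at hb
            rw [hpc] at hb; exact absurd hb (by simp)
      | false =>
        rw [Elab_bump n P m j h2 hpc h1]
        constructor
        · intro hN
          have hj : j = c := by
            by_contra hne
            exact ihj3 j h1 (by omega) hne hN
          exact ⟨hmn, by rw [← hj]; exact hpc, hj⟩
        · rintro ⟨-, -, rfl⟩; exact ihj2
  -- j2
  have hj2 : Nlab n P m d = n := by
    rcases hstruct with ⟨hb, hdc⟩ | ⟨hb, hdc, hb2⟩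
    · rw [hdc, Nlab_cross n P m c hbox hb hc1]; exact ihj2
    · rw [hdc]
      have hE : Elab n P m c = n := by
        rw [Elab_bump n P m c hbox hb hc1]; exact ihj2
      by_cases hin : m + (c+1) ≤ n
      · rw [Nlab_bump n P m (c+1) hin (hb2 (by omega)) (by omega)]
        simpa using hE
      · rw [Nlab_out n P m (c+1) (by omega) (by omega)]
        simpa using hE
  -- j3
  have hj3 : ∀ j, 1 ≤ j → m + j ≤ n + 1 → j ≠ d → Nlab n P m j ≠ n := by
    intro j h1 h2 hne
    by_cases hin : m + j ≤ n
    · cases hpc : P m j with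
      | true =>
        rw [Nlab_cross n P m j hin hpc h1]
        have hjc : j ≠ c := by
          rintro rfl
          rcases hstruct with ⟨-, hdc⟩ | ⟨hb, -, -⟩
          · exact absurd hdc.symm hne
          · rw [hb] at hpc; exact absurd hpc (by simp)
        exact ihj3 j h1 (by omega) hjc
      | false =>
        rw [Nlab_bump n P m j hin hpc h1]
        rcases Nat.lt_or_ge 1 j with h1' | h1'
        · intro hE
          obtain ⟨-, hb, hjc⟩ := (hj4 (j-1) (by omega) (by omega)).1 hE
          rcases hstruct with ⟨hbt, -⟩ | ⟨-, hdc, -⟩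
          · rw [hbt] at hb; exact absurd hb (by simp)
          · omega
        · have : j = 1 := by omega
          subst this
          have h0 : Elab n P m (1-1) = m := rfl
          rw [h0]; omega
    · rw [Nlab_out n P m j (by omega) h1]
      have h1' : 1 < j := by omega
      intro hE
      obtain ⟨-, hb, hjc⟩ := (hj4 (j-1) (by omega) (by omega)).1 hE
      rcases hstruct with ⟨hbt, -⟩ | ⟨-, hdc, -⟩
      · rw [hbt] at hb; exact absurd hb (by simp)
      · omega
  -- j6
  have hj6 : ∀ j, d ≤ j → m + j ≤ n →
      ∃ r c', m ≤ r ∧ CrossAt n P r c' (Elab n P m j) n := by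
    intro j
    induction j using Nat.strong_induction_on with
    | _ j ihj =>
      intro hdj h2
      rcases Nat.eq_or_lt_of_le hdj with rfl | hlt
      · rcases hstruct with ⟨hb, hdc⟩ | ⟨hb, hdc, hb2⟩
        · refine ⟨m, c, le_rfl, h1m, hc1, by omega, hb, Or.inl ⟨?_, ?_⟩⟩
          · rw [westLabel_eq n P m c (by omega)]
            rw [hdc, Elab_cross n P m c hbox hb hc1]
          · rw [southLabel_eq]; exact ihj2
        · have hq : P m (c+1) = false := hb2 (by omega)
          rw [hdc, Elab_bump n P m (c+1) (by omega) hq (by omega)]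
          obtain ⟨r, c', hr, hcr⟩ := ihj5 (c+1) (by omega) (by omega)
          exact ⟨r, c', by omega, hcr⟩
      · cases hpc : P m j with
        | true =>
          rw [Elab_cross n P m j h2 hpc (by omega)]
          exact ihj (j-1) (by omega) (by omega) (by omega)
        | false =>
          rw [Elab_bump n P m j h2 hpc (by omega)]
          obtain ⟨r, c', hr, hcr⟩ := ihj5 j (by omega) (by omega)
          exact ⟨r, c', by omega, hcr⟩
  -- j5
  have hj5 : ∀ j, d < j → m + j ≤ n + 1 →
      ∃ r c', m ≤ r ∧ CrossAt n P r c' (Nlab n P m j) n := by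
    intro j hdj h2
    have h1 : 1 ≤ j := by omega
    by_cases hin : m + j ≤ n
    · cases hpc : P m j with
      | true =>
        rw [Nlab_cross n P m j hin hpc h1]
        obtain ⟨r, c', hr, hcr⟩ := ihj5 j (by omega) (by omega)
        exact ⟨r, c', by omega, hcr⟩
      | false =>
        rw [Nlab_bump n P m j hin hpc h1]
        exact hj6 (j-1) (by omega) (by omega)
    · rw [Nlab_out n P m j (by omega) h1]
      exact hj6 (j-1) (by omega) (by omega)
  -- j7
  have hj7 : delCol n P m = d := by
    rw [delCol, Nat.findGreatest_eq_iff]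
    refine ⟨by omega, fun _ => ⟨hd1, by omega, ?_⟩, ?_⟩
    · rcases hstruct with ⟨hb, hdc⟩ | ⟨hb, hdc, hb2⟩
      · refine Or.inr ⟨by omega, ?_⟩
        rw [southLabel_eq, hdc]; exact ihj2
      · refine Or.inl ?_
        rw [westLabel_eq n P m d (by omega), hdc]
        have : c + 1 - 1 = c := by omega
        rw [this, Elab_bump n P m c hbox hb hc1]; exact ihj2
    · rintro j hj hj2 ⟨hp1, hp2, hp⟩
      rcases hp with hw | ⟨hle, hs⟩
      · rw [westLabel_eq n P m j (by omega)] at hw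
        obtain ⟨-, hb, hjc⟩ := (hj4 (j-1) (by omega) (by omega)).1 hw
        rcases hstruct with ⟨hbt, -⟩ | ⟨-, hdc, -⟩
        · rw [hbt] at hb; exact absurd hb (by simp)
        · omega
      · rw [southLabel_eq] at hs
        exact ihj3 j (by omega) (by omega) (by omega) hs
  exact ⟨⟨hd1, hd2⟩, hj2, hj3, fun j a b => hj4 j a b, hj5, hj6, hj7, fun _ => hstruct⟩
theorem Jrow_all (n : ℕ) (P : ℕ → ℕ → Bool) (hR : Reduced n P)
    (m : ℕ) (h1 : 1 ≤ m) (h2 : m ≤ n) : Jrow n P m := by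
  have key : ∀ k m, 1 ≤ m → m ≤ n → n - m ≤ k → Jrow n P m := by
    intro k
    induction k with
    | zero =>
      intro m h1 h2 h3
      rw [show m = n by omega]
      exact Jrow_base n P (by omega)
    | succ k ih =>
      intro m h1 h2 h3
      rcases Nat.eq_or_lt_of_le h2 with heq | hlt
      · rw [heq]; exact Jrow_base n P (by omega)
      · exact Jrow_step n P hR m h1 hlt (ih (m+1) (by omega) (by omega) (by omega))
  exact key (n - m) m h1 h2 le_rfl

theorem master (n : ℕ) (P : ℕ → ℕ → Bool) (hR : Reduced n P) :
    ∀ i j, 1 ≤ i → 1 ≤ j → i + j ≤ n →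
      (Nlab (n-1) (hatPD n P) i j = Nlab n P i (if j < Dcol n P i then j else j+1)) ∧
      (i + j ≤ n - 1 →
        Elab (n-1) (hatPD n P) i j = Elab n P i (if j < Dcol n P (i+1) then j else j+1)) := by
  suffices H : ∀ k i j, (n - i) + j ≤ k → 1 ≤ i → 1 ≤ j → i + j ≤ n →
      (Nlab (n-1) (hatPD n P) i j = Nlab n P i (if j < Dcol n P i then j else j+1)) ∧
      (i + j ≤ n - 1 →
        Elab (n-1) (hatPD n P) i j = Elab n P i (if j < Dcol n P (i+1) then j else j+1)) by
    exact fun i j => H ((n - i) + j) i j le_rfl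
  intro k
  induction k with
  | zero => intro i j hk h1 h2 h3; omega
  | succ k ih =>
    intro i j hk hi hj hijn
    -- trajectory facts for rows i and i+1
    obtain ⟨⟨hd1, hd2⟩, -, -, -, -, -, hj7, hstruct0⟩ :=
      Jrow_all n P hR i hi (by omega)
    obtain ⟨⟨hc1, hc2⟩, -, -, -, -, -, -, -⟩ :=
      Jrow_all n P hR (i+1) (by omega) (by omega)
    set c := Dcol n P (i+1) with hcdef
    set d := Dcol n P i with hddef
    have hstruct := hstruct0 (by omega)
    have hcd : c ≤ d ∧ d ≤ c + 1 := by
      rcases hstruct with ⟨-, h⟩ | ⟨-, h, -⟩ <;> omega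
    -- unfolding of hatPD in row i
    have hhat : ∀ j', hatPD n P i j' = if j' < d then P i j' else P i (j'+1) := by
      intro j'; rw [hatPD]; rw [hj7]
    -- the west edge correspondence
    have hW : Elab (n-1) (hatPD n P) i (j-1)
        = Elab n P i (if j - 1 < c then j - 1 else j) := by
      rcases Nat.lt_or_ge 1 j with h1' | h1'
      · have := (ih i (j-1) (by omega) hi (by omega) (by omega)).2 (by omega)
        rw [this, ← hcdef]
        congr 1
        split <;> omega
      · have hj1 : j = 1 := by omega
        rw [hj1]
        have e1 : Elab (n-1) (hatPD n P) i (1-1) = i := rfl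
        have e2 : Elab n P i (if 1 - 1 < c then 1-1 else 1) = i := by
          rw [if_pos (by omega)]; rfl
        rw [e1, e2]
    by_cases hin : i + j ≤ n - 1
    -- CASE 1 : inside the staircase of the hat pipe dream
    · rcases Nat.lt_or_ge j c with hjc | hjc
      -- S1 : j < c ≤ d
      · have hjd : j < d := by omega
        have hPij : hatPD n P i j = P i j := by rw [hhat, if_pos hjd]
        have hWW : Elab (n-1) (hatPD n P) i (j-1) = Elab n P i (j-1) := by
          rw [hW, if_pos (by omega)]
        rw [if_pos hjd, if_pos hjc]
        cases hpc : P i j with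
        | true =>
          have hA : Nlab (n-1) (hatPD n P) i j = Nlab n P i j := by
            rw [Nlab_cross (n-1) (hatPD n P) i j hin (by rw [hPij]; exact hpc) hj]
            rw [Nlab_cross n P i j (by omega) hpc hj]
            have := (ih (i+1) j (by omega) (by omega) hj (by omega)).1
            rw [this, if_pos hjc]
          refine ⟨hA, fun hin' => ?_⟩
          rw [Elab_cross (n-1) (hatPD n P) i j hin (by rw [hPij]; exact hpc) hj]
          rw [Elab_cross n P i j (by omega) hpc hj]
          exact hWW
        | false =>
          have hA : Nlab (n-1) (hatPD n P) i j = Nlab n P i j := by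
            rw [Nlab_bump (n-1) (hatPD n P) i j hin (by rw [hPij]; exact hpc) hj]
            rw [Nlab_bump n P i j (by omega) hpc hj]
            exact hWW
          refine ⟨hA, fun hin' => ?_⟩
          rw [Elab_bump (n-1) (hatPD n P) i j hin (by rw [hPij]; exact hpc) hj]
          rw [Elab_bump n P i j (by omega) hpc hj]
          have := (ih (i+1) j (by omega) (by omega) hj (by omega)).1
          rw [this, if_pos hjc]
      · rcases hstruct with ⟨hbt, hdc⟩ | ⟨hbf, hdc, hno⟩
        -- S3a : cross case, c = d ≤ j
        · have hjd : ¬ j < d := by omega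
          have hPij : hatPD n P i j = P i (j+1) := by rw [hhat, if_neg hjd]
          have hWW : Elab (n-1) (hatPD n P) i (j-1) = Elab n P i j := by
            rw [hW]
            rcases Nat.lt_or_ge (j-1) c with h | h
            · rw [if_pos h]
              have hjc' : j = c := by omega
              rw [hjc']
              rw [Elab_cross n P i c (by omega) hbt hc1]
            · rw [if_neg (by omega)]
          rw [if_neg hjd, if_neg (by omega)]
          cases hpc : P i (j+1) with
          | true =>
            have hA : Nlab (n-1) (hatPD n P) i j = Nlab n P i (j+1) := by
              rw [Nlab_cross (n-1) (hatPD n P) i j hin (by rw [hPij]; exact hpc) hj]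
              rw [Nlab_cross n P i (j+1) (by omega) hpc (by omega)]
              have := (ih (i+1) j (by omega) (by omega) hj (by omega)).1
              rw [this, if_neg (by omega)]
            refine ⟨hA, fun hin' => ?_⟩
            rw [Elab_cross (n-1) (hatPD n P) i j hin (by rw [hPij]; exact hpc) hj]
            rw [Elab_cross n P i (j+1) (by omega) hpc (by omega)]
            simpa using hWW
          | false =>
            have hA : Nlab (n-1) (hatPD n P) i j = Nlab n P i (j+1) := by
              rw [Nlab_bump (n-1) (hatPD n P) i j hin (by rw [hPij]; exact hpc) hj]
              rw [Nlab_bump n P i (j+1) (by omega) hpc (by omega)]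
              simpa using hWW
            refine ⟨hA, fun hin' => ?_⟩
            rw [Elab_bump (n-1) (hatPD n P) i j hin (by rw [hPij]; exact hpc) hj]
            rw [Elab_bump n P i (j+1) (by omega) hpc (by omega)]
            have := (ih (i+1) j (by omega) (by omega) hj (by omega)).1
            rw [this, if_neg (by omega)]
        -- bump case, d = c + 1
        · rcases Nat.eq_or_lt_of_le hjc with hjc' | hjc'
          -- S2 : j = c, pivot bump box
          · subst hjc'
            have hPij : hatPD n P i c = P i c := by rw [hhat, if_pos (by omega)]
            have hA : Nlab (n-1) (hatPD n P) i c = Nlab n P i (if c < d then c else c+1) := by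
              rw [if_pos (by omega)]
              rw [Nlab_bump (n-1) (hatPD n P) i c hin (by rw [hPij]; exact hbf) hj]
              rw [Nlab_bump n P i c (by omega) hbf hj]
              rw [hW, if_pos (by omega)]
            refine ⟨hA, fun hin' => ?_⟩
            rw [if_neg (by omega)]
            rw [Elab_bump (n-1) (hatPD n P) i c hin (by rw [hPij]; exact hbf) hj]
            rw [Elab_bump n P i (c+1) (by omega) (hno (by omega)) (by omega)]
            have := (ih (i+1) c (by omega) (by omega) hj (by omega)).1
            rw [this, if_neg (by omega)]
          -- S3b : j ≥ d = c + 1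
          · have hjd : ¬ j < d := by omega
            have hPij : hatPD n P i j = P i (j+1) := by rw [hhat, if_neg hjd]
            have hWW : Elab (n-1) (hatPD n P) i (j-1) = Elab n P i j := by
              rw [hW, if_neg (by omega)]
            rw [if_neg hjd, if_neg (by omega)]
            cases hpc : P i (j+1) with
            | true =>
              have hA : Nlab (n-1) (hatPD n P) i j = Nlab n P i (j+1) := by
                rw [Nlab_cross (n-1) (hatPD n P) i j hin (by rw [hPij]; exact hpc) hj]
                rw [Nlab_cross n P i (j+1) (by omega) hpc (by omega)]
                have := (ih (i+1) j (by omega) (by omega) hj (by omega)).1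
                rw [this, if_neg (by omega)]
              refine ⟨hA, fun hin' => ?_⟩
              rw [Elab_cross (n-1) (hatPD n P) i j hin (by rw [hPij]; exact hpc) hj]
              rw [Elab_cross n P i (j+1) (by omega) hpc (by omega)]
              simpa using hWW
            | false =>
              have hA : Nlab (n-1) (hatPD n P) i j = Nlab n P i (j+1) := by
                rw [Nlab_bump (n-1) (hatPD n P) i j hin (by rw [hPij]; exact hpc) hj]
                rw [Nlab_bump n P i (j+1) (by omega) hpc (by omega)]
                simpa using hWW
              refine ⟨hA, fun hin' => ?_⟩
              rw [Elab_bump (n-1) (hatPD n P) i j hin (by rw [hPij]; exact hpc) hj]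
              rw [Elab_bump n P i (j+1) (by omega) hpc (by omega)]
              have := (ih (i+1) j (by omega) (by omega) hj (by omega)).1
              rw [this, if_neg (by omega)]
    -- CASE 2 : i + j = n, only the north claim matters
    · have hijn' : i + j = n := by omega
      refine ⟨?_, fun hin' => by omega⟩
      have hL : Nlab (n-1) (hatPD n P) i j = Elab (n-1) (hatPD n P) i (j-1) :=
        Nlab_out (n-1) (hatPD n P) i j (by omega) hj
      rw [hL, hW]
      rcases Nat.lt_or_ge j d with hjd | hjd
      · -- j < d forces the bump pivot at the staircase boundary
        have hcj : c = j := by omega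
        have hbf : P i j = false := by
          rcases hstruct with ⟨-, h⟩ | ⟨h, -, -⟩
          · omega
          · rw [← hcj]; exact h
        rw [if_pos hjd, if_pos (by omega)]
        rw [Nlab_bump n P i j (by omega) hbf hj]
      · have hR1 : (if j < d then j else j + 1) = j + 1 := if_neg (by omega)
        rw [hR1, Nlab_out n P i (j+1) (by omega) (by omega)]
        have hsimp : j + 1 - 1 = j := rfl
        rw [hsimp]
        rcases Nat.lt_or_ge (j-1) c with h | h
        · rw [if_pos h]
          have hcj : c = j := by omega
          have hbt : P i j = true := by
            rcases hstruct with ⟨h', -⟩ | ⟨-, h', -⟩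
            · rw [← hcj]; exact h'
            · omega
          exact (Elab_cross n P i j (by omega) hbt hj).symm
        · rw [if_neg (by omega)]
theorem perm_delete (n : ℕ) (hn : 1 ≤ n) (w : Equiv.Perm (Fin n)) (p0 : ℕ) (hp0 : p0 < n)
    (hw : (w ⟨p0, hp0⟩ : ℕ) = n - 1) :
    ∃ what : Equiv.Perm (Fin (n-1)),
      (∀ k : ℕ, (hk : k < n - 1) → (what ⟨k, hk⟩ : ℕ) =
        (w ⟨if k < p0 then k else k+1, by split <;> omega⟩ : ℕ)) ∧
      ((List.finRange (n - 1)).map fun a => (what a : ℕ) + 1)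
          = (((List.finRange n).map fun a => (w a : ℕ) + 1).erase n) := by
  have hb : ∀ k : Fin (n-1), (if (k:ℕ) < p0 then (k:ℕ) else (k:ℕ)+1) < n := by
    intro k; have := k.isLt; split <;> omega
  have hidx : ∀ k : Fin (n-1), (if (k:ℕ) < p0 then (k:ℕ) else (k:ℕ)+1) ≠ p0 := by
    intro k; split <;> omega
  have hval : ∀ k : Fin (n-1),
      ((w ⟨if (k:ℕ) < p0 then (k:ℕ) else (k:ℕ)+1, hb k⟩ : Fin n) : ℕ) < n - 1 := by
    intro k
    have h1 := (w ⟨if (k:ℕ) < p0 then (k:ℕ) else (k:ℕ)+1, hb k⟩).isLt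
    have h2 : ((w ⟨if (k:ℕ) < p0 then (k:ℕ) else (k:ℕ)+1, hb k⟩ : Fin n) : ℕ) ≠ n - 1 := by
      intro h
      have heq : w ⟨if (k:ℕ) < p0 then (k:ℕ) else (k:ℕ)+1, hb k⟩ = w ⟨p0, hp0⟩ :=
        Fin.ext (by rw [h, hw])
      have := congrArg Fin.val (w.injective heq)
      simp only at this
      exact hidx k this
    omega
  set f : Fin (n-1) → Fin (n-1) :=
    fun k => ⟨((w ⟨if (k:ℕ) < p0 then (k:ℕ) else (k:ℕ)+1, hb k⟩ : Fin n) : ℕ), hval k⟩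
    with hf
  have hinj : Function.Injective f := by
    intro a b hab
    have h0 := congrArg Fin.val hab
    have h1 : ((w ⟨if (a:ℕ) < p0 then (a:ℕ) else (a:ℕ)+1, hb a⟩ : Fin n) : ℕ)
        = ((w ⟨if (b:ℕ) < p0 then (b:ℕ) else (b:ℕ)+1, hb b⟩ : Fin n) : ℕ) := h0
    have h2 := w.injective (Fin.ext h1)
    have h3 : (if (a:ℕ) < p0 then (a:ℕ) else (a:ℕ)+1)
        = (if (b:ℕ) < p0 then (b:ℕ) else (b:ℕ)+1) := congrArg Fin.val h2
    have ha := a.isLt; have hb' := b.isLt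
    apply Fin.ext
    rcases Nat.lt_or_ge (a:ℕ) p0 with h | h <;> rcases Nat.lt_or_ge (b:ℕ) p0 with h' | h'
    · rw [if_pos h, if_pos h'] at h3; exact h3
    · rw [if_pos h, if_neg (by omega)] at h3; omega
    · rw [if_neg (by omega), if_pos h'] at h3; omega
    · rw [if_neg (by omega), if_neg (by omega)] at h3; omega
  have hbij : Function.Bijective f := (Finite.injective_iff_bijective).mp hinj
  refine ⟨Equiv.ofBijective f hbij, fun k hk => rfl, ?_⟩
  -- the list identity
  set L : List ℕ := (List.finRange n).map fun a => (w a : ℕ) + 1 with hL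
  have hLlen : L.length = n := by simp [hL]
  have hget : ∀ k (hk : k < n), L[k]'(by omega) = (w ⟨k, hk⟩ : ℕ) + 1 := by
    intro k hk
    simp [hL, List.getElem_finRange]
  have hLp0 : L[p0]'(by omega) = n := by rw [hget p0 hp0, hw]; omega
  have hsplit : L = L.take p0 ++ n :: L.drop (p0+1) := by
    conv_lhs => rw [← List.take_append_drop p0 L]
    rw [← List.getElem_cons_drop (by omega : p0 < L.length), hLp0]
  have hnotmem : n ∉ L.take p0 := by
    intro hmem
    rw [List.mem_take_iff_getElem] at hmem
    obtain ⟨i, hi, he⟩ := hmem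
    have hi' : i < n := by simp [hLlen] at hi; omega
    rw [hget i hi'] at he
    have : (w ⟨i, hi'⟩ : ℕ) = n - 1 := by omega
    have heq : w ⟨i, hi'⟩ = w ⟨p0, hp0⟩ := Fin.ext (by rw [this, hw])
    have := congrArg Fin.val (w.injective heq)
    simp only at this
    simp [hLlen] at hi
    omega
  have herase : L.erase n = L.take p0 ++ L.drop (p0+1) := by
    conv_lhs => rw [hsplit]
    rw [List.erase_append_right _ hnotmem, List.erase_cons_head]
  rw [herase]
  apply List.ext_getElem
  · simp [hLlen]; omega
  · intro k hk1 hk2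
    have hk : k < n - 1 := by simpa using hk1
    have hlhs : ((List.finRange (n-1)).map fun a => ((Equiv.ofBijective f hbij) a : ℕ) + 1)[k]'hk1
        = ((w ⟨if k < p0 then k else k+1, by split <;> omega⟩ : Fin n) : ℕ) + 1 := by
      simp only [List.getElem_map, List.getElem_finRange]
      rfl
    have htake : (L.take p0).length = p0 := by simp [hLlen]; omega
    rcases Nat.lt_or_ge k p0 with h | h
    · rw [hlhs]
      rw [List.getElem_append_left (by omega)]
      rw [List.getElem_take, hget k (by omega)]
      simp [if_pos h]
    · rw [hlhs]
      rw [List.getElem_append_right (by omega)]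
      rw [List.getElem_drop]
      have getcong : ∀ (m1 m2 : ℕ) (hm : m1 = m2) (h1 : m1 < L.length),
          L[m1]'h1 = L[m2]'(by omega) := by
        intro m1 m2 hm h1; subst hm; rfl
      rw [getcong (p0 + 1 + (k - (L.take p0).length)) (k+1) (by rw [htake]; omega)
        (by rw [htake, hLlen]; omega)]
      rw [hget (k+1) (by omega)]
      simp [if_neg (by omega : ¬ k < p0)]
theorem hW_lemma (n : ℕ) (P : ℕ → ℕ → Bool) (hR : Reduced n P)
    (i j : ℕ) (hi : 1 ≤ i) (hj : 1 ≤ j) (hijn : i + j ≤ n) :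
    Elab (n-1) (hatPD n P) i (j-1)
      = Elab n P i (if j - 1 < Dcol n P (i+1) then j - 1 else j) := by
  rcases Nat.lt_or_ge 1 j with h1' | h1'
  · have := (master n P hR i (j-1) hi (by omega) (by omega)).2 (by omega)
    rw [this]
    congr 1
    split <;> omega
  · obtain ⟨⟨hc1, -⟩, -⟩ := Jrow_all n P hR (i+1) (by omega) (by omega)
    rw [show j = 1 by omega]
    have e1 : Elab (n-1) (hatPD n P) i (1-1) = i := rfl
    have e2 : Elab n P i (if 1-1 < Dcol n P (i+1) then 1-1 else 1) = i := by
      rw [if_pos (by omega)]; rfl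
    rw [e1, e2]

theorem cross_fwd (n : ℕ) (P : ℕ → ℕ → Bool) (hR : Reduced n P)
    (i j p q : ℕ) (h : CrossAt (n-1) (hatPD n P) i j p q) :
    CrossAt n P i (if j < Dcol n P i then j else j + 1) p q := by
  obtain ⟨hi, hj, hijn1, hPt, hlab⟩ := h
  obtain ⟨⟨hd1, hd2⟩, -, -, -, -, -, hj7, hstruct0⟩ := Jrow_all n P hR i hi (by omega)
  obtain ⟨⟨hc1, hc2⟩, -, -, -, -, -, -, -⟩ := Jrow_all n P hR (i+1) (by omega) (by omega)
  set c := Dcol n P (i+1) with hcdef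
  set d := Dcol n P i with hddef
  have hstruct := hstruct0 (by omega)
  have hhat : ∀ j', hatPD n P i j' = if j' < d then P i j' else P i (j'+1) := by
    intro j'; rw [hatPD]; rw [hj7]
  have hW := hW_lemma n P hR i j hi hj (by omega)
  rw [← hcdef] at hW
  rcases Nat.lt_or_ge j d with hjd | hjd
  · have hPij : P i j = true := by
      have := hPt; rw [hhat j, if_pos hjd] at this; exact this
    have hjc : j < c := by
      rcases hstruct with ⟨-, hdc⟩ | ⟨hbf, hdc, -⟩
      · omega
      · rcases Nat.lt_or_ge j c with h | h
        · exact h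
        · have hj' : j = c := by omega
          rw [hj'] at hPij; rw [hPij] at hbf; exact absurd hbf (by simp)
    rw [if_pos hjd]
    refine ⟨hi, hj, by omega, hPij, ?_⟩
    have hwest : westLabel (n-1) (hatPD n P) i j = westLabel n P i j := by
      rw [westLabel_eq (n-1) (hatPD n P) i j hj, westLabel_eq n P i j hj]
      rw [hW, if_pos (by omega)]
    have hsouth : southLabel (n-1) (hatPD n P) i j = southLabel n P i j := by
      rw [southLabel_eq, southLabel_eq]
      have := (master n P hR (i+1) j (by omega) hj (by omega)).1
      rw [this, ← hcdef, if_pos hjc]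
    rw [← hwest, ← hsouth]; exact hlab
  · have hPij : P i (j+1) = true := by
      have := hPt; rw [hhat j, if_neg (by omega)] at this; exact this
    rw [if_neg (by omega)]
    refine ⟨hi, by omega, by omega, hPij, ?_⟩
    have hwest : westLabel (n-1) (hatPD n P) i j = westLabel n P i (j+1) := by
      rw [westLabel_eq (n-1) (hatPD n P) i j hj, westLabel_eq n P i (j+1) (by omega)]
      rw [hW]
      have hsimp : j + 1 - 1 = j := rfl
      rw [hsimp]
      rcases Nat.lt_or_ge (j-1) c with h | h
      · rw [if_pos h]
        have hcj : c = j := by omega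
        have hbt : P i j = true := by
          rcases hstruct with ⟨h', hdc⟩ | ⟨-, hdc, -⟩
          · rw [← hcj]; exact h'
          · omega
        exact (Elab_cross n P i j (by omega) hbt hj).symm
      · rw [if_neg (by omega)]
    have hsouth : southLabel (n-1) (hatPD n P) i j = southLabel n P i (j+1) := by
      rw [southLabel_eq, southLabel_eq]
      have := (master n P hR (i+1) j (by omega) hj (by omega)).1
      rw [this, ← hcdef, if_neg (by omega)]
    rw [← hwest, ← hsouth]; exact hlab

theorem cross_bwd (n : ℕ) (P : ℕ → ℕ → Bool) (hR : Reduced n P)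
    (i J p q : ℕ) (hp : p ≠ n) (hq : q ≠ n) (h : CrossAt n P i J p q) :
    ∃ j, (if j < Dcol n P i then j else j + 1) = J
      ∧ CrossAt (n-1) (hatPD n P) i j p q := by
  obtain ⟨hi, hJ1, hiJ, hPt, hlab⟩ := h
  obtain ⟨⟨hd1, hd2⟩, -, -, -, -, -, hj7, hstruct0⟩ := Jrow_all n P hR i hi (by omega)
  obtain ⟨⟨hc1, hc2⟩, hj2c, -, -, -, -, -, -⟩ := Jrow_all n P hR (i+1) (by omega) (by omega)
  set c := Dcol n P (i+1) with hcdef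
  set d := Dcol n P i with hddef
  have hstruct := hstruct0 (by omega)
  have hhat : ∀ j', hatPD n P i j' = if j' < d then P i j' else P i (j'+1) := by
    intro j'; rw [hatPD]; rw [hj7]
  have hJd : J ≠ d := by
    intro hJd
    rcases hstruct with ⟨hbt, hdc⟩ | ⟨hbf, hdc, hno⟩
    · have hs : southLabel n P i J = n := by
        rw [southLabel_eq, hJd, hdc]
        exact hj2c
      rcases hlab with ⟨-, h2⟩ | ⟨-, h2⟩
      · exact hq (by rw [← h2, hs])
      · exact hp (by rw [← h2, hs])
    · have hPf : P i J = false := by rw [hJd, hdc]; exact hno (by omega)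
      rw [hPt] at hPf; exact absurd hPf (by simp)
  rcases Nat.lt_or_ge J d with hJd' | hJd'
  · have hJc : J < c := by
      rcases hstruct with ⟨-, hdc⟩ | ⟨hbf, hdc, -⟩
      · omega
      · rcases Nat.lt_or_ge J c with h | h
        · exact h
        · have hj' : J = c := by omega
          rw [hj'] at hPt; rw [hPt] at hbf; exact absurd hbf (by simp)
    have hin : i + J ≤ n - 1 := by omega
    have hW := hW_lemma n P hR i J hi hJ1 (by omega)
    rw [← hcdef] at hW
    refine ⟨J, by rw [if_pos hJd'], hi, hJ1, hin, ?_, ?_⟩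
    · rw [hhat J, if_pos hJd']; exact hPt
    · have hwest : westLabel (n-1) (hatPD n P) i J = westLabel n P i J := by
        rw [westLabel_eq (n-1) (hatPD n P) i J hJ1, westLabel_eq n P i J hJ1]
        rw [hW, if_pos (by omega)]
      have hsouth : southLabel (n-1) (hatPD n P) i J = southLabel n P i J := by
        rw [southLabel_eq, southLabel_eq]
        have := (master n P hR (i+1) J (by omega) hJ1 (by omega)).1
        rw [this, ← hcdef, if_pos hJc]
      rw [hwest, hsouth]; exact hlab
  · have hJd2 : d < J := by omega
    have hj1' : 1 ≤ J - 1 := by omega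
    have hW := hW_lemma n P hR i (J-1) hi hj1' (by omega)
    rw [← hcdef] at hW
    refine ⟨J - 1, by rw [if_neg (by omega)]; omega, hi, hj1', by omega, ?_, ?_⟩
    · rw [hhat (J-1), if_neg (by omega), show J - 1 + 1 = J by omega]
      exact hPt
    · have hwest : westLabel (n-1) (hatPD n P) i (J-1) = westLabel n P i J := by
        rw [westLabel_eq (n-1) (hatPD n P) i (J-1) hj1', westLabel_eq n P i J hJ1]
        rw [hW]
        rcases Nat.lt_or_ge (J-1-1) c with h | h
        · rw [if_pos h]
          have hcj : c = J - 1 := by omega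
          have hbt : P i (J-1) = true := by
            rcases hstruct with ⟨h', hdc⟩ | ⟨-, hdc, -⟩
            · rw [← hcj]; exact h'
            · omega
          exact (Elab_cross n P i (J-1) (by omega) hbt hj1').symm
        · rw [if_neg (by omega)]
      have hsouth : southLabel (n-1) (hatPD n P) i (J-1) = southLabel n P i J := by
        rw [southLabel_eq, southLabel_eq]
        have := (master n P hR (i+1) (J-1) (by omega) hj1' (by omega)).1
        rw [this, ← hcdef, if_neg (by omega), show J - 1 + 1 = J by omega]
      rw [hwest, hsouth]; exact hlab
theorem reduced_hat (n : ℕ) (P : ℕ → ℕ → Bool) (hR : Reduced n P) :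
    Reduced (n-1) (hatPD n P) := by
  intro p q i j i' j' h h'
  have H := cross_fwd n P hR i j p q h
  have H' := cross_fwd n P hR i' j' p q h'
  obtain ⟨hieq, hjeq⟩ := hR p q i _ i' _ H H'
  refine ⟨hieq, ?_⟩
  rw [← hieq] at hjeq
  rcases Nat.lt_or_ge j (Dcol n P i) with a | a <;>
    rcases Nat.lt_or_ge j' (Dcol n P i) with b | b
  · rw [if_pos a, if_pos b] at hjeq; omega
  · rw [if_pos a, if_neg (by omega)] at hjeq; omega
  · rw [if_neg (by omega), if_pos b] at hjeq; omega
  · rw [if_neg (by omega), if_neg (by omega)] at hjeq; omega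

theorem theta_hat (n : ℕ) (P : ℕ → ℕ → Bool) (hR : Reduced n P)
    (i j : ℕ) (h1 : 1 ≤ i) (h2 : i < j) (h3 : j ≤ n - 1) :
    theta (n-1) (hatPD n P) i j = theta n P i j := by
  by_cases h : ∃ rc : ℕ × ℕ, CrossAt n P rc.1 rc.2 i j
  · have hup : ∃ rc : ℕ × ℕ, CrossAt (n-1) (hatPD n P) rc.1 rc.2 i j := by
      obtain ⟨⟨r, C⟩, hC⟩ := h
      obtain ⟨jj, -, hC'⟩ := cross_bwd n P hR r C i j (by omega) (by omega) hC
      exact ⟨(r, jj), hC'⟩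
    rw [theta, dif_pos hup, theta, dif_pos h]
    have hs1 := Classical.choose_spec hup
    have hs2 := Classical.choose_spec h
    have H1 := cross_fwd n P hR _ _ i j hs1
    exact (hR i j _ _ _ _ H1 hs2).1
  · have hup : ¬ ∃ rc : ℕ × ℕ, CrossAt (n-1) (hatPD n P) rc.1 rc.2 i j := by
      rintro ⟨⟨r, jj⟩, hC⟩
      exact h ⟨(r, if jj < Dcol n P r then jj else jj+1), cross_fwd n P hR r jj i j hC⟩
    rw [theta, dif_neg hup, theta, dif_neg h]
/-- `P̂` is a reduced pipe dream for the permutation `ŵ ∈ S_{n-1}`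
obtained from `w` by deleting the value `n` from its one-line notation, and its
inversions tableau `Θ(P̂)` is `Θ(P)` with column `n` deleted. -/
theorem hat_pipe_dream {n : ℕ} (hn : 1 ≤ n) (w : Equiv.Perm (Fin n)) (P : RPD w) :
    ∃ what : Equiv.Perm (Fin (n - 1)),
      ((List.finRange (n - 1)).map fun a => (what a : ℕ) + 1)
          = (((List.finRange n).map fun a => (w a : ℕ) + 1).erase n) ∧
      IsPD what (hatPD n P.1) ∧ Reduced (n - 1) (hatPD n P.1) ∧
      ∀ i j, 1 ≤ i → i < j → j ≤ n - 1 →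
        theta (n - 1) (hatPD n P.1) i j = theta n P.1 i j := by
  obtain ⟨hP, hR⟩ := P.2
  obtain ⟨⟨hd1, hd2⟩, hj2, -, -, -, -, hj7, -⟩ := Jrow_all n P.1 hR 1 le_rfl hn
  set d1 := Dcol n P.1 1 with hd1def
  have hperm : permVal w d1 = n := by
    have h := hP.2 d1 (by omega) (by omega)
    rw [northLabel_eq] at h
    rw [← h]; exact hj2
  have hp0lt : d1 - 1 < n := by omega
  have hw0 : (w ⟨d1 - 1, hp0lt⟩ : ℕ) = n - 1 := by
    have h2 : permVal w d1 = (w ⟨d1-1, hp0lt⟩ : ℕ) + 1 := by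
      rw [permVal, dif_pos (⟨by omega, by omega⟩ : 1 ≤ d1 ∧ d1 ≤ n)]
    omega
  obtain ⟨what, hwhat, hlist⟩ := perm_delete n hn w (d1 - 1) hp0lt hw0
  refine ⟨what, hlist, ⟨?_, ?_⟩, reduced_hat n P.1 hR, fun i j a b c => theta_hat n P.1 hR i j a b c⟩
  · -- crosses of the hat pipe dream lie in the staircase of size n-1
    intro i j ht
    rw [hatPD] at ht
    rcases Nat.lt_or_ge j (delCol n P.1 i) with hlt | hge
    · rw [if_pos hlt] at ht
      obtain ⟨ha, hb, hc⟩ := hP.1 i j ht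
      refine ⟨ha, hb, ?_⟩
      by_contra hcon
      have hij : i + j = n := by omega
      obtain ⟨⟨hdd1, hdd2⟩, -, -, -, -, -, hj7i, hstruct0⟩ :=
        Jrow_all n P.1 hR i ha (by omega)
      obtain ⟨⟨hcc1, hcc2⟩, -⟩ := Jrow_all n P.1 hR (i+1) (by omega) (by omega)
      have hstruct := hstruct0 (by omega)
      rw [hj7i] at hlt
      rcases hstruct with ⟨hbt, hdc⟩ | ⟨hbf, hdc, -⟩
      · omega
      · have hcj : Dcol n P.1 (i+1) = j := by omega
        rw [hcj] at hbf; rw [ht] at hbf; exact absurd hbf (by simp)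
    · rw [if_neg (by omega)] at ht
      obtain ⟨ha, hb, hc⟩ := hP.1 i (j+1) ht
      have hj0 : 1 ≤ j := by
        by_contra h0
        obtain ⟨⟨hdd1, hdd2⟩, -, -, -, -, -, hj7i, -⟩ :=
          Jrow_all n P.1 hR i ha (by omega)
        rw [hj7i] at hge; omega
      exact ⟨ha, hj0, by omega⟩
  · -- north labels give the one-line notation of what
    intro j h1 h2
    rw [northLabel_eq]
    have hm := (master n P.1 hR 1 j le_rfl h1 (by omega)).1
    rw [← hd1def] at hm
    rw [hm]
    have hs1 : 1 ≤ (if j < d1 then j else j+1) := by split <;> omega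
    have hs2 : (if j < d1 then j else j+1) ≤ n := by split <;> omega
    have hNP := hP.2 _ hs1 hs2
    rw [northLabel_eq] at hNP
    rw [hNP]
    rw [permVal, dif_pos (⟨hs1, hs2⟩ : 1 ≤ (if j < d1 then j else j+1) ∧ (if j < d1 then j else j+1) ≤ n)]
    rw [permVal, dif_pos (⟨h1, h2⟩ : 1 ≤ j ∧ j ≤ n - 1)]
    have hwk := hwhat (j-1) (by omega)
    rw [hwk]
    have hidx : (if j < d1 then j else j + 1) - 1 = (if j - 1 < d1 - 1 then j - 1 else j) := by
      split <;> split <;> omega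
    have hfin : (⟨(if j < d1 then j else j+1) - 1, by omega⟩ : Fin n)
        = ⟨if j - 1 < d1 - 1 then j - 1 else j, by split <;> omega⟩ := Fin.ext hidx
    rw [hfin]
    have hidx2 : (if j - 1 < d1 - 1 then j - 1 else j)
        = (if j - 1 < d1 - 1 then j - 1 else j - 1 + 1) := by split <;> omega
    have hfin2 : (⟨if j - 1 < d1 - 1 then j - 1 else j, by split <;> omega⟩ : Fin n)
        = ⟨if j - 1 < d1 - 1 then j - 1 else j - 1 + 1, by split <;> omega⟩ := Fin.ext hidx2
    rw [hfin2]
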